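/- Assume the twisted-form setup with A perfect: k a commutative ring, R a commutative k-algebra, S a commutative R-algebra, A a perfect k-algebra, B an R-subalgebra of A_S = A⊗_k S, N a (B,R)-dimodule, N_S = N⊗_R S endowed with an (A_S,S)-dimodule structure compatible with the (B,R)-structure (b·(n⊗s) = (b·n)⊗s and (n⊗s)·b = (n·b)⊗s for b ∈ B, n ∈ N, s ∈ S), and π : N_S → N an R-linear map with π(b·m) = b·π(m) and π(m·b) = π(m)·b for all b ∈ B, m ∈ N_S. Suppose further that there is a k-linear map ε : Der_k(R, Cent_k(B,N)) → Der_k(S, Cent_k(A_S,N_S)) with ρ̃ ∘ ε = id, where ρ̃(d)(r) = ρ(d(r)) and ρ(f)(b) = π(f(b)). Then σ := ρ ∘ σ_S ∘ ε (with σ_S(d)(a⊗s) = d(s)(a⊗1)) is a k-linear section of η_{B,N}, and consequently the map d ↦ (d − σ(η_{B,N}(d)), η_{B,N}(d)) is a k-module isomorphism Der_k(B,N) ≅ Der_R(B,N) ⊕ Der_k(R, Cent_k(B,N)). -/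

import Mathlib

/-- The `k`-submodule `Der_k(B,N)` of `Hom_k(B,N)`: `k`-linear derivations of the
`R`-algebra `B` (multiplication `mulB`) with values in the `(B,R)`-dimodule `N`. -/
def derkSubmodule {k R B N : Type*} [CommRing k] [CommRing R] [Algebra k R]
    [AddCommGroup B] [Module k B] [Module R B] [IsScalarTower k R B]
    [AddCommGroup N] [Module k N] [Module R N] [IsScalarTower k R N]
    (mulB : B →ₗ[R] B →ₗ[R] B)
    (lactN : B →ₗ[R] N →ₗ[R] N) (ractN : N →ₗ[R] B →ₗ[R] N) :
    Submodule k (B →ₗ[k] N) where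
  carrier := {d | ∀ b₁ b₂ : B, d (mulB b₁ b₂) = ractN (d b₁) b₂ + lactN b₁ (d b₂)}
  add_mem' := by
    intro f g hf hg b₁ b₂
    simp only [LinearMap.add_apply, hf b₁ b₂, hg b₁ b₂, map_add, LinearMap.add_apply]
    abel
  zero_mem' := by intro b₁ b₂; simp
  smul_mem' := by
    intro c f hf b₁ b₂
    simp only [LinearMap.smul_apply, hf b₁ b₂, smul_add,
      LinearMap.map_smul_of_tower, LinearMap.smul_apply]

/-- The `k`-submodule `Der_k(R, Cent_k(B,N))` of `Hom_k(R, Hom_k(B,N))`: `k`-linear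
maps `D` on `R` whose values are centroidal transformations and which satisfy the
Leibniz rule `D(r₁r₂) = D(r₁)·r₂ + r₁·D(r₂)` for the `R`-bimodule structure
`(r·χ)(b) = r • χ(b)`, `(χ·r)(b) = χ(r • b)` of the centroid. -/
def derRCentSubmodule {k R B N : Type*} [CommRing k] [CommRing R] [Algebra k R]
    [AddCommGroup B] [Module k B] [Module R B] [IsScalarTower k R B]
    [AddCommGroup N] [Module k N] [Module R N] [IsScalarTower k R N]
    (mulB : B →ₗ[R] B →ₗ[R] B)
    (lactN : B →ₗ[R] N →ₗ[R] N) (ractN : N →ₗ[R] B →ₗ[R] N) :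
    Submodule k (R →ₗ[k] (B →ₗ[k] N)) where
  carrier := {D |
    (∀ (r : R) (b₁ b₂ : B),
      D r (mulB b₁ b₂) = ractN (D r b₁) b₂ ∧ D r (mulB b₁ b₂) = lactN b₁ (D r b₂)) ∧
    (∀ (r₁ r₂ : R) (b : B),
      D (r₁ * r₂) b = D r₁ (r₂ • b) + r₁ • D r₂ b)}
  add_mem' := by
    intro f g hf hg
    refine ⟨fun r b₁ b₂ => ?_, fun r₁ r₂ b => ?_⟩
    · constructor
      · simp only [LinearMap.add_apply, (hf.1 r b₁ b₂).1, (hg.1 r b₁ b₂).1, map_add,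
          LinearMap.add_apply]
      · simp only [LinearMap.add_apply, (hf.1 r b₁ b₂).2, (hg.1 r b₁ b₂).2, map_add]
    · simp only [LinearMap.add_apply, hf.2 r₁ r₂ b, hg.2 r₁ r₂ b, smul_add]
      abel
  zero_mem' := by
    refine ⟨fun r b₁ b₂ => ?_, fun r₁ r₂ b => ?_⟩ <;> simp
  smul_mem' := by
    intro c f hf
    refine ⟨fun r b₁ b₂ => ?_, fun r₁ r₂ b => ?_⟩
    · constructor
      · simp only [LinearMap.smul_apply, (hf.1 r b₁ b₂).1,
          LinearMap.map_smul_of_tower, LinearMap.smul_apply]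
      · simp only [LinearMap.smul_apply, (hf.1 r b₁ b₂).2, LinearMap.map_smul_of_tower]
    · simp only [LinearMap.smul_apply, hf.2 r₁ r₂ b, smul_add, smul_comm c r₁]

open TensorProduct

set_option maxHeartbeats 4000000

/-- The multiplication of an `R`-subalgebra `B` of `A_S = S ⊗[k] A`, i.e. of an
`R`-submodule closed under the multiplication `mulS` of `A_S`, bundled as an
`R`-bilinear map on `↥B`. -/
def subalgMul {k R S A : Type*} [CommRing k]
    [CommRing R] [Algebra k R]
    [CommRing S] [Algebra R S] [Algebra k S] [IsScalarTower k R S]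
    [AddCommGroup A] [Module k A]
    (mulS : (S ⊗[k] A) →ₗ[S] (S ⊗[k] A) →ₗ[S] (S ⊗[k] A))
    (B : Submodule R (S ⊗[k] A))
    (hB : ∀ x ∈ B, ∀ y ∈ B, mulS x y ∈ B) :
    ↥B →ₗ[R] ↥B →ₗ[R] ↥B where
  toFun b₁ :=
    { toFun := fun b₂ => ⟨mulS ↑b₁ ↑b₂, hB _ b₁.2 _ b₂.2⟩
      map_add' := fun x y => Subtype.ext (by simp)
      map_smul' := fun r x => Subtype.ext (by simp) }
  map_add' x y := LinearMap.ext fun b => Subtype.ext (by simp)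
  map_smul' r x := LinearMap.ext fun b => Subtype.ext (by simp)

/-- (Twisted-form setup with `A` perfect, as in Statement 12.)
Suppose `ε : Der_k(R, Cent_k(B,N)) → Der_k(S, Cent_k(A_S,N_S))` is a `k`-linear
map with `ρ̃ ∘ ε = id`, and let `σ_S` be the `k`-linear map of Statement 11
(`σ_S(D)(s ⊗ a) = D(s)(1 ⊗ a)`).  Then `σ := ρ ∘ σ_S ∘ ε` is a section of
`η_{B,N}` (part 1), and consequently every `d ∈ Der_k(B,N)` decomposes uniquely
as `d = d₀ + σ(D)` with `d₀ ∈ Der_R(B,N)` and `D ∈ Der_k(R, Cent_k(B,N))`;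
i.e. `d ↦ (d − σ(η(d)), η(d))` is a `k`-module isomorphism
`Der_k(B,N) ≅ Der_R(B,N) ⊕ Der_k(R, Cent_k(B,N))` (part 2). -/
theorem stmt_15 {k R S A N : Type*} [CommRing k]
    [CommRing R] [Algebra k R]
    [CommRing S] [Algebra R S] [Algebra k S] [IsScalarTower k R S]
    [AddCommGroup A] [Module k A]
    [AddCommGroup N] [Module R N] [Module k N] [IsScalarTower k R N]
    (mul : A →ₗ[k] A →ₗ[k] A)
    (hperf : Submodule.span k {x : A | ∃ a b : A, x = mul a b} = ⊤)
    (mulS : (S ⊗[k] A) →ₗ[S] (S ⊗[k] A) →ₗ[S] (S ⊗[k] A))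
    (hmulS : ∀ (s₁ s₂ : S) (a₁ a₂ : A),
      mulS (s₁ ⊗ₜ a₁) (s₂ ⊗ₜ a₂) = (s₁ * s₂) ⊗ₜ (mul a₁ a₂))
    (B : Submodule R (S ⊗[k] A))
    (hB : ∀ x ∈ B, ∀ y ∈ B, mulS x y ∈ B)
    (lactN : ↥B →ₗ[R] N →ₗ[R] N) (ractN : N →ₗ[R] ↥B →ₗ[R] N)
    (lactS : (S ⊗[k] A) →ₗ[S] (S ⊗[R] N) →ₗ[S] (S ⊗[R] N))
    (ractS : (S ⊗[R] N) →ₗ[S] (S ⊗[k] A) →ₗ[S] (S ⊗[R] N))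
    (hcompatL : ∀ (b : ↥B) (s : S) (n : N),
      lactS (↑b) (s ⊗ₜ n) = s ⊗ₜ (lactN b n))
    (hcompatR : ∀ (b : ↥B) (s : S) (n : N),
      ractS (s ⊗ₜ n) (↑b) = s ⊗ₜ (ractN n b))
    (π : (S ⊗[R] N) →ₗ[R] N)
    (hπL : ∀ (b : ↥B) (m : S ⊗[R] N), π (lactS (↑b) m) = lactN b (π m))
    (hπR : ∀ (b : ↥B) (m : S ⊗[R] N), π (ractS m (↑b)) = ractN (π m) b)
    (σS : ↥(derRCentSubmodule (k := k) mulS lactS ractS) →ₗ[k]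
        ((S ⊗[k] A) →ₗ[k] (S ⊗[R] N)))
    (hσS : ∀ (D : ↥(derRCentSubmodule (k := k) mulS lactS ractS)) (s : S) (a : A),
      σS D (s ⊗ₜ a) = D.1 s ((1 : S) ⊗ₜ a))
    (ε : ↥(derRCentSubmodule (k := k) (B := ↥B) (subalgMul mulS B hB) lactN ractN) →ₗ[k]
        ↥(derRCentSubmodule (k := k) mulS lactS ractS))
    (hε : ∀ (D : ↥(derRCentSubmodule (k := k) (B := ↥B) (subalgMul mulS B hB) lactN ractN))
        (r : R) (b : ↥B),
      π ((ε D).1 (algebraMap R S r) ↑b) = D.1 r b) :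
    (∀ (D : ↥(derRCentSubmodule (k := k) (B := ↥B) (subalgMul mulS B hB) lactN ractN))
        (r : R) (b : ↥B),
      π (σS (ε D) ↑(r • b)) - r • π (σS (ε D) ↑b) = D.1 r b) ∧
    (∀ d : ↥B →ₗ[k] N,
      d ∈ derkSubmodule (k := k) (B := ↥B) (subalgMul mulS B hB) lactN ractN →
      ∃! p : (↥B →ₗ[k] N) ×
          ↥(derRCentSubmodule (k := k) (B := ↥B) (subalgMul mulS B hB) lactN ractN),
        p.1 ∈ derkSubmodule (k := k) (B := ↥B) (subalgMul mulS B hB) lactN ractN ∧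
        (∀ (r : R) (b : ↥B), p.1 (r • b) = r • p.1 b) ∧
        ∀ b : ↥B, d b = p.1 b + π (σS (ε p.2) ↑b)) := by
  
  -- abbreviations
  classical
  -- key lemma: σS E (s • x) = E s x + s • σS E x
  have keyS : ∀ (E : ↥(derRCentSubmodule (k := k) mulS lactS ractS)) (s : S)
      (x : S ⊗[k] A), σS E (s • x) = E.1 s x + s • σS E x := by
    intro E s x
    induction x using TensorProduct.induction_on with
    | zero => simp
    | tmul s' a =>
        have h1 : s • (s' ⊗ₜ[k] a) = (s * s') ⊗ₜ[k] a := by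
          rw [smul_tmul']; rfl
        have h2 : s' • ((1 : S) ⊗ₜ[k] a) = s' ⊗ₜ[k] a := by
          rw [smul_tmul']; simp [smul_eq_mul]
        rw [h1, hσS, E.2.2 s s' ((1 : S) ⊗ₜ[k] a), h2, hσS]
    | add x y hx hy =>
        rw [smul_add, map_add, hx, hy, map_add, map_add, smul_add]
        abel
  -- key part-1 computation, for arbitrary E in the image situation
  have part1 : ∀ (D : ↥(derRCentSubmodule (k := k) (B := ↥B) (subalgMul mulS B hB) lactN ractN))
      (r : R) (b : ↥B),
      π (σS (ε D) ↑(r • b)) - r • π (σS (ε D) ↑b) = D.1 r b := by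
    intro D r b
    have hc : ((r • b : ↥B) : S ⊗[k] A) = algebraMap R S r • (b : S ⊗[k] A) :=
      (algebraMap_smul S r ((b : ↥B) : S ⊗[k] A)).symm
    rw [hc, keyS (ε D) (algebraMap R S r) (b : S ⊗[k] A), map_add]
    have hsm : π (algebraMap R S r • σS (ε D) (b : S ⊗[k] A))
        = r • π (σS (ε D) (b : S ⊗[k] A)) := by
      rw [algebraMap_smul, map_smul]
    rw [hsm, hε]
    abel
  refine ⟨part1, ?_⟩
  -- σS E is a derivation of A_S
  have derivS : ∀ (E : ↥(derRCentSubmodule (k := k) mulS lactS ractS))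
      (x y : S ⊗[k] A),
      σS E (mulS x y) = ractS (σS E x) y + lactS x (σS E y) := by
    intro E x y
    induction x using TensorProduct.induction_on with
    | zero => simp
    | tmul s₁ a₁ =>
        induction y using TensorProduct.induction_on with
        | zero => simp
        | tmul s₂ a₂ =>
            have e1 : s₂ • ((1 : S) ⊗ₜ[k] (mul a₁ a₂)) = mulS ((1:S) ⊗ₜ[k] a₁) (s₂ ⊗ₜ[k] a₂) := by
              rw [hmulS, smul_tmul']; simp [smul_eq_mul]
            have e2 : (1 : S) ⊗ₜ[k] (mul a₁ a₂) = mulS ((1:S) ⊗ₜ[k] a₁) ((1:S) ⊗ₜ[k] a₂) := by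
              rw [hmulS, one_mul]
            have e3 : s₁ • lactS ((1:S) ⊗ₜ[k] a₁) (E.1 s₂ ((1:S) ⊗ₜ[k] a₂))
                = lactS (s₁ ⊗ₜ[k] a₁) (E.1 s₂ ((1:S) ⊗ₜ[k] a₂)) := by
              have : s₁ • ((1:S) ⊗ₜ[k] a₁) = s₁ ⊗ₜ[k] a₁ := by
                rw [smul_tmul']; simp [smul_eq_mul]
              rw [← this, map_smul, LinearMap.smul_apply]
            rw [hmulS, hσS, E.2.2 s₁ s₂ ((1 : S) ⊗ₜ[k] (mul a₁ a₂)), e1,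
              (E.2.1 s₁ ((1:S) ⊗ₜ[k] a₁) (s₂ ⊗ₜ[k] a₂)).1]
            conv_lhs => rw [e2, congrArg (s₁ • ·) (E.2.1 s₂ ((1:S) ⊗ₜ[k] a₁) ((1:S) ⊗ₜ[k] a₂)).2]
            rw [e3, hσS, hσS]
        | add y₁ y₂ hy₁ hy₂ =>
            simp only [map_add, LinearMap.add_apply] at *
            rw [hy₁, hy₂]; abel
    | add x₁ x₂ hx₁ hx₂ =>
        simp only [map_add, LinearMap.add_apply] at *
        rw [hx₁, hx₂]; abel
  -- σ(D) as a function on B is a derivation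
  have σder : ∀ (D : ↥(derRCentSubmodule (k := k) (B := ↥B) (subalgMul mulS B hB) lactN ractN))
      (b₁ b₂ : ↥B),
      π (σS (ε D) ↑(subalgMul mulS B hB b₁ b₂))
        = ractN (π (σS (ε D) ↑b₁)) b₂ + lactN b₁ (π (σS (ε D) ↑b₂)) := by
    intro D b₁ b₂
    have hc : (↑(subalgMul mulS B hB b₁ b₂) : S ⊗[k] A) = mulS ↑b₁ ↑b₂ := rfl
    rw [hc, derivS (ε D) ↑b₁ ↑b₂, map_add, hπR b₂, hπL b₁]
  intro d hd
  -- the derivation η(d) : R →ₗ[k] B →ₗ[k] N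
  have hcomm : ∀ (c : k) (r : R) (b : ↥B), r • (c • b) = c • (r • b) := fun c r b =>
    smul_comm r c b
  obtain ⟨Dlin, hDr⟩ : ∃ F : R →ₗ[k] (↥B →ₗ[k] N),
      ∀ (r : R) (b : ↥B), F r b = d (r • b) - r • d b :=
    ⟨{ toFun := fun r =>
         { toFun := fun b => d (r • b) - r • d b
           map_add' := by
             intro x y
             rw [smul_add, map_add, map_add, smul_add]; abel
           map_smul' := by
             intro c b
             rw [hcomm c r b, map_smul d c (r • b), map_smul d c b,
               smul_comm r c (d b), smul_sub, RingHom.id_apply] }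
       map_add' := by
         intro r₁ r₂; ext b
         simp only [LinearMap.coe_mk, AddHom.coe_mk, LinearMap.add_apply]
         rw [add_smul r₁ r₂ b, map_add, add_smul r₁ r₂ (d b)]
         abel
       map_smul' := by
         intro c r; ext b
         simp only [LinearMap.coe_mk, AddHom.coe_mk, RingHom.id_apply, LinearMap.smul_apply]
         rw [smul_assoc c r b, map_smul d c (r • b), smul_assoc c r (d b), smul_sub] },
      fun _ _ => rfl⟩
  have hDmem : Dlin ∈ derRCentSubmodule (k := k) (B := ↥B) (subalgMul mulS B hB) lactN ractN := by
    constructor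
    · intro r b₁ b₂
      constructor
      · rw [hDr, hDr]
        have h1 : r • subalgMul mulS B hB b₁ b₂ = subalgMul mulS B hB (r • b₁) b₂ := by
          rw [map_smul, LinearMap.smul_apply]
        have hR1 : ractN (d (r • b₁) - r • d b₁) b₂
            = ractN (d (r • b₁)) b₂ - r • ractN (d b₁) b₂ := by
          rw [map_sub, LinearMap.sub_apply, map_smul ractN r (d b₁), LinearMap.smul_apply]
        have h2 : lactN (r • b₁) (d b₂) = r • lactN b₁ (d b₂) := by
          rw [map_smul, LinearMap.smul_apply]
        rw [hR1, h1, hd (r • b₁) b₂, hd b₁ b₂, smul_add, h2]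
        abel
      · rw [hDr, hDr]
        have h1 : r • subalgMul mulS B hB b₁ b₂ = subalgMul mulS B hB b₁ (r • b₂) := by
          rw [map_smul]
        have hL1 : lactN b₁ (d (r • b₂) - r • d b₂)
            = lactN b₁ (d (r • b₂)) - r • lactN b₁ (d b₂) := by
          rw [map_sub, map_smul (lactN b₁) r (d b₂)]
        have h2 : ractN (d b₁) (r • b₂) = r • ractN (d b₁) b₂ := by
          rw [map_smul]
        rw [hL1, h1, hd b₁ (r • b₂), hd b₁ b₂, smul_add, h2]
        abel
    · intro r₁ r₂ b
      rw [hDr, hDr, hDr, mul_smul, mul_smul, smul_sub, smul_comm r₁ r₂ (d b)]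
      abel
  obtain ⟨Dm, hDmval⟩ :
      ∃ E : ↥(derRCentSubmodule (k := k) (B := ↥B) (subalgMul mulS B hB) lactN ractN),
        E.1 = Dlin := ⟨⟨Dlin, hDmem⟩, rfl⟩
  -- σ(Dm) as a k-linear map on B
  have hπk : ∀ (c : k) (m : S ⊗[R] N), π (c • m) = c • π m := by
    intro c m
    rw [← algebraMap_smul S c m, IsScalarTower.algebraMap_apply k R S,
      algebraMap_smul, map_smul, algebraMap_smul]
  obtain ⟨σd, hσdval⟩ : ∃ f : ↥B →ₗ[k] N, ∀ b : ↥B, f b = π (σS (ε Dm) ↑b) :=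
    ⟨{ toFun := fun b => π (σS (ε Dm) ↑b)
       map_add' := by
         intro x y
         rw [show ((x + y : ↥B) : S ⊗[k] A) = ↑x + ↑y from rfl, map_add, map_add]
       map_smul' := by
         intro c b
         rw [show ((c • b : ↥B) : S ⊗[k] A) = c • (b : S ⊗[k] A) from rfl,
           map_smul, RingHom.id_apply, hπk] }, fun _ => rfl⟩
  refine ⟨(d - σd, Dm), ⟨?_, ?_, ?_⟩, ?_⟩
  · -- d - σd is a derivation
    intro b₁ b₂
    simp only [LinearMap.sub_apply]
    rw [hd b₁ b₂, hσdval, hσdval, hσdval, σder Dm b₁ b₂, map_sub, map_sub,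
      LinearMap.sub_apply]
    abel
  · -- d - σd is R-linear
    intro r b
    have := part1 Dm r b
    rw [← hσdval, ← hσdval] at this
    have hD : Dm.1 r b = d (r • b) - r • d b := by rw [hDmval, hDr]
    rw [hD] at this
    simp only [LinearMap.sub_apply]
    rw [smul_sub, sub_eq_sub_iff_sub_eq_sub]
    exact this.symm
  · intro b
    simp only [LinearMap.sub_apply]
    rw [hσdval]
    abel
  · -- uniqueness
    rintro ⟨q₁, q₂⟩ ⟨hq₁der, hq₁R, hqsum⟩
    have hσq : ∀ b : ↥B, π (σS (ε q₂) ↑b) = d b - q₁ b := by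
      intro b; rw [hqsum b]; abel
    have hq₂ : q₂ = Dm := by
      apply Subtype.ext
      apply LinearMap.ext; intro r
      apply LinearMap.ext; intro b
      have h := part1 q₂ r b
      rw [hσq, hσq, hq₁R r b] at h
      have hD : Dm.1 r b = d (r • b) - r • d b := by rw [hDmval, hDr]
      rw [← h, hD]
      rw [smul_sub]
      abel
    have hq₁ : q₁ = d - σd := by
      apply LinearMap.ext; intro b
      have := hσq b
      rw [hq₂] at this
      rw [LinearMap.sub_apply, hσdval, this]
      abel
    rw [hq₁, hq₂]
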